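/- Let μ, ψ, θ, λ̃ > 0. Define f(m) = (λ̃+μ)/(θ+μ) + (θ/(θ+μ))·((μ+ψ)/ψ)·(1 − (μ/(μ+ψ))^m(1 + mψ/(μ+ψ))) for m ≥ 1. Then f is monotone increasing in m and for all m ≥ 1: (λ̃+μ)/(θ+μ) + (θ/(θ+μ))·ψ/(μ+ψ) ≤ f(m) ≤ (λ̃+μ)/(θ+μ) + (θ/(θ+μ))·(μ+ψ)/ψ. -/
import Mathlib


/-- `f(m) = E[C₂ | C₁ = m]` is monotone increasing in `m ≥ 1` and bounded between
`f(1)` and `lim_{m→∞} f(m)`. -/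
theorem stmt15 (μ ψ θ lamt : ℝ) (hμ : 0 < μ) (hψ : 0 < ψ) (hθ : 0 < θ)
    (hlamt : 0 < lamt)
    (f : ℕ → ℝ)
    (hf : ∀ m : ℕ, f m = (lamt + μ) / (θ + μ)
        + (θ / (θ + μ)) * ((μ + ψ) / ψ)
            * (1 - (μ / (μ + ψ)) ^ m * (1 + m * ψ / (μ + ψ)))) :
    (∀ m : ℕ, 1 ≤ m → f m ≤ f (m + 1)) ∧
    (∀ m : ℕ, 1 ≤ m →
        (lamt + μ) / (θ + μ) + (θ / (θ + μ)) * (ψ / (μ + ψ)) ≤ f m ∧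
        f m ≤ (lamt + μ) / (θ + μ) + (θ / (θ + μ)) * ((μ + ψ) / ψ)) := by
  have hμψ : 0 < μ + ψ := by linarith
  have hr0 : 0 < μ / (μ + ψ) := div_pos hμ hμψ
  have hs0 : 0 < ψ / (μ + ψ) := div_pos hψ hμψ
  have hrs : μ / (μ + ψ) + ψ / (μ + ψ) = 1 := by field_simp
  have hB : 0 < θ / (θ + μ) * ((μ + ψ) / ψ) := by positivity
  have hms : ∀ m : ℕ, (m : ℝ) * ψ / (μ + ψ) = m * (ψ / (μ + ψ)) := fun m =>
    mul_div_assoc _ _ _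
  have key : ∀ m : ℕ,
      (μ / (μ + ψ)) ^ (m + 1) * (1 + (↑(m + 1)) * ψ / (μ + ψ)) ≤
        (μ / (μ + ψ)) ^ m * (1 + (m : ℝ) * ψ / (μ + ψ)) := by
    intro m
    rw [hms, hms, pow_succ, Nat.cast_add, Nat.cast_one]
    have hrm : (0 : ℝ) ≤ (μ / (μ + ψ)) ^ m := le_of_lt (pow_pos hr0 m)
    have hm0 : (0 : ℝ) ≤ (m : ℝ) := Nat.cast_nonneg m
    have h1 : μ / (μ + ψ) * (1 + ((m : ℝ) + 1) * (ψ / (μ + ψ))) ≤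
        1 + (m : ℝ) * (ψ / (μ + ψ)) := by
      have hr : μ / (μ + ψ) = 1 - ψ / (μ + ψ) := by linarith
      rw [hr]
      nlinarith [sq_nonneg (ψ / (μ + ψ)), mul_nonneg hm0 (sq_nonneg (ψ / (μ + ψ)))]
    calc (μ / (μ + ψ)) ^ m * (μ / (μ + ψ)) * (1 + ((m : ℝ) + 1) * (ψ / (μ + ψ)))
        = (μ / (μ + ψ)) ^ m * (μ / (μ + ψ) * (1 + ((m : ℝ) + 1) * (ψ / (μ + ψ)))) := by
          ring
      _ ≤ (μ / (μ + ψ)) ^ m * (1 + (m : ℝ) * (ψ / (μ + ψ))) := by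
          exact mul_le_mul_of_nonneg_left h1 hrm
  have hmono : ∀ m : ℕ, f m ≤ f (m + 1) := by
    intro m
    rw [hf m, hf (m + 1)]
    nlinarith [key m, hB]
  constructor
  · intro m _; exact hmono m
  · intro m hm
    constructor
    · have hf1 : f 1 = (lamt + μ) / (θ + μ) + θ / (θ + μ) * (ψ / (μ + ψ)) := by
        rw [hf 1]
        field_simp
        ring
      have : ∀ n : ℕ, f 1 ≤ f (1 + n) := by
        intro n
        induction n with
        | zero => simp
        | succ k ih => exact le_trans ih (hmono (1 + k))
      have h := this (m - 1)
      rw [Nat.add_sub_cancel' hm] at h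
      linarith [hf1 ▸ h]
    · rw [hf m]
      have hg : 0 ≤ (μ / (μ + ψ)) ^ m * (1 + (m : ℝ) * ψ / (μ + ψ)) := by positivity
      nlinarith [hB, hg]
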